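/- Let f be a bounded, symmetric (f(x) = f(−x) for all x) and strictly unimodal probability density on ℝ (f attains its maximum at the unique point 0 and is strictly decreasing on (0, ∞)). Then for every c > 0 and every t ≠ 0, ∫_{−c}^{c} f(x + t) dx < ∫_{−c}^{c} f(x) dx. -/
import Mathlib


open MeasureTheory

/-- One-dimensional strict version of Anderson's lemma: for a bounded, symmetric,
strictly unimodal probability density `f` on `ℝ`, shifting the window `[-c, c]`
strictly decreases the integral. -/
theorem anderson_strict_one_dim
    (f : ℝ → ℝ)
    (hnn : ∀ x, 0 ≤ f x)
    (hint : Integrable f (volume : Measure ℝ))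
    (hone : ∫ x, f x = 1)
    (hbdd : ∃ C : ℝ, ∀ x, f x ≤ C)
    (hsymm : ∀ x, f x = f (-x))
    (hmode : ∀ x : ℝ, x ≠ 0 → f x < f 0)
    (hanti : StrictAntiOn f (Set.Ioi (0 : ℝ))) :
    ∀ c : ℝ, 0 < c → ∀ t : ℝ, t ≠ 0 →
      (∫ x in Set.Icc (-c) c, f (x + t)) < ∫ x in Set.Icc (-c) c, f x := by
  intro c hc t ht
  -- key pointwise lemma
  have habs : ∀ x : ℝ, f x = f |x| := by
    intro x
    rcases abs_choice x with h | h
    · rw [h]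
    · rw [h, ← hsymm]
  have key : ∀ a b : ℝ, |a| < |b| → f b < f a := by
    intro a b hab
    rw [habs a, habs b]
    rcases eq_or_lt_of_le (abs_nonneg a) with h0 | h0
    · have hb : |b| ≠ 0 := by rw [← h0] at hab; exact ne_of_gt hab
      rw [← h0]
      exact hmode |b| hb
    · exact hanti h0 (h0.trans hab) hab
  -- convert Icc integrals to interval integrals
  have hIcc : ∀ g : ℝ → ℝ, (∫ x in Set.Icc (-c) c, g x) = ∫ x in (-c)..c, g x := by
    intro g
    rw [intervalIntegral.integral_of_le (by linarith), MeasureTheory.integral_Icc_eq_integral_Ioc]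
  -- main claim for positive shifts
  have H : ∀ s : ℝ, 0 < s →
      (∫ x in (-c)..c, f (x + s)) < ∫ x in (-c)..c, f x := by
    intro s hs
    rw [intervalIntegral.integral_comp_add_right f s]
    -- strict comparison of the two side strips
    have strip : (∫ u in (0:ℝ)..s, f (u + c)) < ∫ u in (0:ℝ)..s, f (u + -c) := by
      have hpos : ∀ u ∈ Set.Ioc (0:ℝ) s, 0 < f (u + -c) - f (u + c) := by
        intro u hu
        have h1 : |u + -c| < |u + c| := by
          rw [abs_of_pos (by linarith [hu.1] : (0:ℝ) < u + c)]
          rw [abs_lt]; constructor <;> [linarith [hu.1]; linarith [hu.1]]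
        have := key (u + -c) (u + c) h1
        linarith
      have hg : IntegrableOn (fun u => f (u + -c) - f (u + c)) (Set.Ioc 0 s) volume :=
        ((hint.comp_add_right (-c)).sub (hint.comp_add_right c)).integrableOn
      have hae : 0 ≤ᵐ[volume.restrict (Set.Ioc (0:ℝ) s)]
          (fun u => f (u + -c) - f (u + c)) :=
        (ae_restrict_iff' measurableSet_Ioc).2 (Filter.Eventually.of_forall
          fun u hu => (hpos u hu).le)
      have hposint : 0 < ∫ u in Set.Ioc (0:ℝ) s, (f (u + -c) - f (u + c)) := by
        rw [setIntegral_pos_iff_support_of_nonneg_ae hae hg]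
        have hsub : Set.Ioc (0:ℝ) s ⊆ Function.support (fun u => f (u + -c) - f (u + c)) :=
          fun u hu => ne_of_gt (hpos u hu)
        have : Function.support (fun u => f (u + -c) - f (u + c)) ∩ Set.Ioc 0 s
            = Set.Ioc 0 s := Set.inter_eq_self_of_subset_right hsub
        rw [this, Real.volume_Ioc]
        simpa using hs
      have hsplit : (∫ u in Set.Ioc (0:ℝ) s, (f (u + -c) - f (u + c)))
          = (∫ u in Set.Ioc (0:ℝ) s, f (u + -c)) - ∫ u in Set.Ioc (0:ℝ) s, f (u + c) :=
        integral_sub (hint.comp_add_right (-c)).integrableOn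
          (hint.comp_add_right c).integrableOn
      rw [intervalIntegral.integral_of_le hs.le, intervalIntegral.integral_of_le hs.le]
      rw [hsplit] at hposint
      linarith
    have e1 : (∫ u in (0:ℝ)..s, f (u + c)) = ∫ x in c..(s + c), f x := by
      simpa using intervalIntegral.integral_comp_add_right f c (a := 0) (b := s)
    have e2 : (∫ u in (0:ℝ)..s, f (u + -c)) = ∫ x in (-c)..(s + -c), f x := by
      simpa using intervalIntegral.integral_comp_add_right f (-c) (a := 0) (b := s)
    have hII : ∀ a b : ℝ, IntervalIntegrable f volume a b := fun a b =>
      hint.intervalIntegrable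
    have add1 : (∫ x in (-c)..c, f x) + ∫ x in c..(s + c), f x
        = ∫ x in (-c)..(s + c), f x :=
      intervalIntegral.integral_add_adjacent_intervals (hII _ _) (hII _ _)
    have add2 : (∫ x in (-c)..(s + -c), f x) + ∫ x in (s + -c)..(s + c), f x
        = ∫ x in (-c)..(s + c), f x := by
      have := intervalIntegral.integral_add_adjacent_intervals
        (a := -c) (b := s + -c) (c := s + c) (hII _ _) (hII _ _)
      simpa using this
    have h3 : (∫ x in c..(s + c), f x) < ∫ x in (-c)..(s + -c), f x := by
      rw [← e1, ← e2]; exact strip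
    have e3 : (-c) + s = s + -c := by ring
    have e4 : c + s = s + c := by ring
    rw [e3, e4]
    linarith
  rcases lt_or_gt_of_ne ht with hneg | hpos
  · -- t < 0 : use symmetry to reduce to positive shift
    rw [hIcc, hIcc]
    have flip : (∫ x in (-c)..c, f (x + t)) = ∫ x in (-c)..c, f (x + -t) := by
      have e : ∀ x : ℝ, f (x + t) = (fun y => f (y + -t)) (-x) := by
        intro x
        simp only
        rw [hsymm (x + t)]
        ring_nf
      calc (∫ x in (-c)..c, f (x + t))
          = ∫ x in (-c)..c, (fun y => f (y + -t)) (-x) := by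
            exact intervalIntegral.integral_congr fun x _ => e x
        _ = ∫ x in (-c)..c, f (x + -t) := by
            rw [intervalIntegral.integral_comp_neg (fun y => f (y + -t))]
            norm_num
    rw [flip]
    exact H (-t) (by linarith)
  · rw [hIcc, hIcc]
    exact H t hpos
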